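/- Kolmogorov-type self-improvement: there is an absolute constant c such that for every 0 < δ < 1 and every locally integrable f with ℳf < ∞ a.e., ℳ((ℳf)^δ) ≤ c (1−δ)^{-1} (ℳf)^δ pointwise a.e.; in particular (ℳf)^δ is an A₁ weight with [(ℳf)^δ]_{A₁} ≤ c/(1−δ). -/

import Mathlib

open MeasureTheory
open scoped ENNReal

lemma aux_two_rpow_le {δ : ℝ} (h0 : 0 ≤ δ) (h1 : δ ≤ 1) : (2:ℝ) ^ δ ≤ 1 + δ := by
  have h := Real.geom_mean_le_arith_mean2_weighted h0 (by linarith : (0:ℝ) ≤ 1 - δ)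
    (by norm_num : (0:ℝ) ≤ 2) zero_le_one (by ring)
  rw [Real.one_rpow, mul_one] at h
  linarith

lemma aux_geom_inv_le {δ : ℝ} (h0 : 0 < δ) (h1 : δ < 1) :
    (1 - (2:ℝ≥0∞) ^ (δ - 1))⁻¹ ≤ 2 * (ENNReal.ofReal (1 - δ))⁻¹ := by
  have hr2 : (0:ℝ) < 2 := by norm_num
  have hkey : (1 - δ) / 2 ≤ 1 - (2:ℝ) ^ (δ - 1) := by
    have h2 : (2:ℝ) ^ (δ - 1) = 2 ^ δ / 2 := by
      rw [Real.rpow_sub hr2, Real.rpow_one]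
    have := aux_two_rpow_le h0.le h1.le
    rw [h2]; linarith
  have hrnn : (0:ℝ) ≤ (2:ℝ) ^ (δ - 1) := Real.rpow_nonneg (by norm_num) _
  have hofr : (1 : ℝ≥0∞) - (2:ℝ≥0∞) ^ (δ - 1) = ENNReal.ofReal (1 - (2:ℝ) ^ (δ - 1)) := by
    rw [ENNReal.ofReal_sub _ hrnn, ENNReal.ofReal_one, ← ENNReal.ofReal_rpow_of_pos hr2,
      ENNReal.ofReal_ofNat]
  rw [hofr]
  have h1' : (ENNReal.ofReal ((1 - δ) / 2))⁻¹ = 2 * (ENNReal.ofReal (1 - δ))⁻¹ := by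
    rw [ENNReal.ofReal_div_of_pos hr2, ENNReal.ofReal_ofNat,
      ENNReal.inv_div (Or.inl (by norm_num)) (Or.inl (by norm_num)), div_eq_mul_inv]
  rw [← h1']
  exact ENNReal.inv_le_inv' (ENNReal.ofReal_le_ofReal hkey)

lemma aux_weak {α : Type*} [MeasurableSpace α] (μ : Measure α)
    (𝒟 : Set (Set α)) (hcount : 𝒟.Countable)
    (hmeas : ∀ Q ∈ 𝒟, MeasurableSet Q)
    (hfin : ∀ Q ∈ 𝒟, 0 < μ Q ∧ μ Q < ⊤)
    (hnest : ∀ Q ∈ 𝒟, ∀ Q' ∈ 𝒟, Disjoint Q Q' ∨ Q ⊆ Q' ∨ Q' ⊆ Q)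
    (g : α → ℝ≥0∞) (t : ℝ≥0∞) (ht : t ≠ 0) :
    μ {y | t < ⨆ Q ∈ 𝒟, ⨆ (_ : y ∈ Q), (μ Q)⁻¹ * ∫⁻ z in Q, g z ∂μ} ≤
      (∫⁻ z, g z ∂μ) / t := by
  classical
  set S : Set (Set α) := {Q | Q ∈ 𝒟 ∧ t < (μ Q)⁻¹ * ∫⁻ z in Q, g z ∂μ} with hS
  -- each element of S has controlled measure
  have hQb : ∀ Q ∈ S, μ Q ≤ (∫⁻ z in Q, g z ∂μ) / t := by
    rintro Q ⟨hQ𝒟, hQt⟩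
    have hμ0 : μ Q ≠ 0 := (hfin Q hQ𝒟).1.ne'
    have hμt : μ Q ≠ ⊤ := (hfin Q hQ𝒟).2.ne
    have ht' : t ≠ ⊤ := hQt.ne_top
    rw [ENNReal.le_div_iff_mul_le (Or.inl ht) (Or.inl ht')]
    calc μ Q * t ≤ μ Q * ((μ Q)⁻¹ * ∫⁻ z in Q, g z ∂μ) :=
          mul_le_mul_right hQt.le _
      _ = ∫⁻ z in Q, g z ∂μ := by
          rw [← mul_assoc, ENNReal.mul_inv_cancel hμ0 hμt, one_mul]
  -- the superlevel set is contained in ⋃₀ S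
  have hsub : {y | t < ⨆ Q ∈ 𝒟, ⨆ (_ : y ∈ Q), (μ Q)⁻¹ * ∫⁻ z in Q, g z ∂μ} ⊆ ⋃₀ S := by
    intro y hy
    simp only [Set.mem_setOf_eq, lt_iSup_iff] at hy
    obtain ⟨Q, hQ𝒟, hyQ, hQt⟩ := hy
    exact ⟨Q, ⟨hQ𝒟, hQt⟩, hyQ⟩
  refine le_trans (measure_mono hsub) ?_
  rcases S.eq_empty_or_nonempty with hSe | hSne
  · simp [hSe]
  obtain ⟨s, hs⟩ := ((hcount.mono (fun Q hQ => hQ.1)).exists_eq_range hSne)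
  have hsS : ∀ i, s i ∈ S := fun i => hs ▸ Set.mem_range_self i
  -- finite union bound
  have key : ∀ n : ℕ, ∀ T : Finset ℕ, T.card ≤ n →
      μ (⋃ i ∈ T, s i) ≤ (∫⁻ z in (⋃ i ∈ T, s i), g z ∂μ) / t := by
    intro n
    induction n with
    | zero =>
      intro T hT
      replace hT : T = ∅ := Finset.card_eq_zero.mp (Nat.le_zero.mp hT)
      simp [hT]
    | succ n ih =>
      intro T hT
      rcases T.eq_empty_or_nonempty with hTe | hTne
      · simp [hTe]
      obtain ⟨i, hiT, hmax⟩ := Set.Finite.exists_maximalFor s (↑T : Set ℕ)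
        T.finite_toSet (by exact_mod_cast hTne)
      set T₂ : Finset ℕ := T.filter (fun j => ¬ s j ⊆ s i) with hT₂def
      have hiT₂ : i ∉ T₂ := by simp [hT₂def]
      have hT₂sub : T₂ ⊆ T := Finset.filter_subset _ _
      have hT₂card : T₂.card ≤ n := by
        have : T₂ ⊆ T.erase i := by
          intro j hj
          rw [Finset.mem_filter] at hj
          refine Finset.mem_erase.mpr ⟨?_, hj.1⟩
          rintro rfl; exact hj.2 subset_rfl
        calc T₂.card ≤ (T.erase i).card := Finset.card_le_card this
          _ = T.card - 1 := Finset.card_erase_of_mem hiT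
          _ ≤ n := by omega
      have hdisj : ∀ j ∈ T₂, Disjoint (s j) (s i) := by
        intro j hj
        rw [Finset.mem_filter] at hj
        rcases hnest (s j) (hsS j).1 (s i) (hsS i).1 with h | h | h
        · exact h
        · exact absurd h hj.2
        · exact absurd (hmax hj.1 h) hj.2
      have hU : (⋃ j ∈ T, s j) = s i ∪ ⋃ j ∈ T₂, s j := by
        apply Set.Subset.antisymm
        · refine Set.iUnion₂_subset fun j hj => ?_
          by_cases hji : s j ⊆ s i
          · exact hji.trans Set.subset_union_left
          · exact (Set.subset_biUnion_of_mem (Finset.mem_filter.mpr ⟨hj, hji⟩)).trans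
              Set.subset_union_right
        · exact Set.union_subset (Set.subset_biUnion_of_mem hiT)
            (Set.biUnion_subset_biUnion_left hT₂sub)
      have hU₂meas : MeasurableSet (⋃ j ∈ T₂, s j) :=
        MeasurableSet.biUnion T₂.countable_toSet fun j _ => hmeas (s j) (hsS j).1
      have hdisj2 : Disjoint (s i) (⋃ j ∈ T₂, s j) :=
        Set.disjoint_iUnion₂_right.mpr fun j hj => (hdisj j hj).symm
      rw [hU]
      calc μ (s i ∪ ⋃ j ∈ T₂, s j) ≤ μ (s i) + μ (⋃ j ∈ T₂, s j) := measure_union_le _ _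
        _ ≤ (∫⁻ z in s i, g z ∂μ) / t + (∫⁻ z in (⋃ j ∈ T₂, s j), g z ∂μ) / t :=
            add_le_add (hQb _ (hsS i)) (ih T₂ hT₂card)
        _ = (∫⁻ z in (s i ∪ ⋃ j ∈ T₂, s j), g z ∂μ) / t := by
            rw [ENNReal.div_add_div_same, lintegral_union hU₂meas hdisj2]
  -- pass to the countable union
  have hsU : ⋃₀ S = ⋃ i, s i := by rw [hs, Set.sUnion_range]
  rw [hsU, measure_iUnion_eq_iSup_accumulate]
  refine iSup_le fun n => ?_
  have hacc : Set.accumulate s n = ⋃ i ∈ Finset.Iic n, s i := by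
    rw [Set.accumulate_def]
    ext x; simp [Finset.mem_Iic]
  rw [hacc]
  refine le_trans (key (n+1) (Finset.Iic n) (by simp)) ?_
  gcongr
  exact Measure.restrict_le_self
lemma aux_kolmogorov {α : Type*} [MeasurableSpace α] (ν : Measure α)
    (h : α → ℝ≥0∞) (hh : Measurable h) (A V : ℝ≥0∞)
    (hA0 : A ≠ 0) (hAt : A ≠ ⊤) (hV0 : V ≠ 0) (hVt : V ≠ ⊤)
    (hν : ν Set.univ ≤ V)
    (hw : ∀ t : ℝ≥0∞, t ≠ 0 → t ≠ ⊤ → ν {y | t < h y} ≤ A / t)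
    (δ : ℝ) (hδ0 : 0 < δ) (hδ1 : δ < 1) :
    ∫⁻ y, h y ^ δ ∂ν ≤ 5 * (ENNReal.ofReal (1 - δ))⁻¹ * (A / V) ^ δ * V := by
  set a : ℝ≥0∞ := A / V with ha
  have ha0 : a ≠ 0 := (ENNReal.div_pos hA0 hVt).ne'
  have hat : a ≠ ⊤ := (ENNReal.div_lt_top hAt hV0).ne
  have hb0 : (2:ℝ≥0∞) ≠ 0 := by norm_num
  have hbt : (2:ℝ≥0∞) ≠ ⊤ := by norm_num
  have hbk0 : ∀ r : ℝ, (2:ℝ≥0∞) ^ r ≠ 0 := fun r => (ENNReal.rpow_pos (by norm_num) hbt).ne'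
  have hbkt : ∀ k : ℕ, (2:ℝ≥0∞) ^ (k:ℝ) ≠ ⊤ := fun k =>
    ENNReal.rpow_ne_top_of_nonneg (Nat.cast_nonneg k) hbt
  have haδ0 : a ^ δ ≠ 0 := (ENNReal.rpow_pos (pos_iff_ne_zero.mpr ha0) hat).ne'
  -- pointwise estimate
  have hpt : ∀ y, h y ^ δ ≤ a ^ δ +
      ∑' k : ℕ, Set.indicator {z | a * 2 ^ (k:ℝ) < h z}
        (fun _ => (a * 2 ^ ((k:ℝ) + 1)) ^ δ) y := by
    intro y
    by_cases hya : h y ≤ a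
    · exact le_add_right (ENNReal.rpow_le_rpow hya hδ0.le)
    push_neg at hya
    by_cases hyt : h y = ⊤
    · have hmem : ∀ k : ℕ, y ∈ {z | a * 2 ^ (k:ℝ) < h z} := by
        intro k
        simp only [Set.mem_setOf_eq, hyt]
        exact (ENNReal.mul_ne_top hat (hbkt k)).lt_top
      have htop : (∑' k : ℕ, Set.indicator {z | a * 2 ^ (k:ℝ) < h z}
          (fun _ => (a * 2 ^ ((k:ℝ) + 1)) ^ δ) y) = ⊤ := by
        refine top_le_iff.mp ?_
        calc (⊤:ℝ≥0∞) = ∑' _ : ℕ, a ^ δ := (ENNReal.tsum_const_eq_top_of_ne_zero haδ0).symm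
          _ ≤ _ := by
            refine ENNReal.tsum_le_tsum fun k => ?_
            rw [Set.indicator_of_mem (hmem k)]
            refine ENNReal.rpow_le_rpow ?_ hδ0.le
            calc a = a * 1 := (mul_one a).symm
              _ ≤ a * 2 ^ ((k:ℝ) + 1) := by
                refine mul_le_mul_right ?_ a
                rw [show (1:ℝ≥0∞) = 2 ^ (0:ℝ) by simp]
                exact ENNReal.rpow_le_rpow_of_exponent_le one_le_two (by positivity)
      rw [htop]
      simp
    -- a < h y < ⊤ : find the right level
    have hP : ∃ n : ℕ, h y ≤ a * 2 ^ ((n:ℝ)) := by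
      obtain ⟨n, hn⟩ := ENNReal.exists_nat_gt (r := h y / a) (ENNReal.div_lt_top hyt ha0).ne
      refine ⟨n, ?_⟩
      have h1 : h y < n * a := (ENNReal.div_lt_iff (Or.inl ha0) (Or.inl hat)).mp hn
      have h2 : (n:ℝ≥0∞) ≤ 2 ^ ((n:ℝ)) := by
        rw [ENNReal.rpow_natCast]
        calc (n:ℝ≥0∞) ≤ ((2 ^ n : ℕ) : ℝ≥0∞) := Nat.cast_le.mpr (Nat.lt_two_pow_self).le
          _ = 2 ^ n := by push_cast; ring
      calc h y ≤ n * a := h1.le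
        _ ≤ 2 ^ ((n:ℝ)) * a := mul_le_mul_left h2 a
        _ = a * 2 ^ ((n:ℝ)) := mul_comm _ _
    classical
    set n₀ := Nat.find hP with hn₀def
    have hn₀ : h y ≤ a * 2 ^ ((n₀:ℝ)) := Nat.find_spec hP
    have hn₀pos : 0 < n₀ := by
      rcases Nat.eq_zero_or_pos n₀ with hz | hp
      · exfalso
        have := hn₀
        rw [hz] at this
        simp only [Nat.cast_zero, ENNReal.rpow_zero, mul_one] at this
        exact absurd this (not_le.mpr hya)
      · exact hp
    set k := n₀ - 1 with hkdef
    have hkn : n₀ = k + 1 := (Nat.succ_pred_eq_of_pos hn₀pos).symm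
    have hklt : ¬ h y ≤ a * 2 ^ ((k:ℝ)) := Nat.find_min hP (by omega)
    have hkmem : y ∈ {z | a * 2 ^ ((k:ℝ)) < h z} := not_le.mp hklt
    have hup : h y ≤ a * 2 ^ ((k:ℝ) + 1) := by
      have : ((n₀:ℝ)) = (k:ℝ) + 1 := by rw [hkn]; push_cast; ring
      rw [← this]; exact hn₀
    calc h y ^ δ ≤ (a * 2 ^ ((k:ℝ) + 1)) ^ δ := ENNReal.rpow_le_rpow hup hδ0.le
      _ = Set.indicator {z | a * 2 ^ ((k:ℝ)) < h z}
            (fun _ => (a * 2 ^ ((k:ℝ) + 1)) ^ δ) y := (Set.indicator_of_mem hkmem (fun _ => (a * 2 ^ ((k:ℝ) + 1)) ^ δ)).symm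
      _ ≤ ∑' k : ℕ, Set.indicator {z | a * 2 ^ ((k:ℝ)) < h z}
            (fun _ => (a * 2 ^ ((k:ℝ) + 1)) ^ δ) y := ENNReal.le_tsum k
      _ ≤ _ := le_add_self
  have hmeasset : ∀ k : ℕ, MeasurableSet {z | a * 2 ^ ((k:ℝ)) < h z} := fun k =>
    measurableSet_lt measurable_const hh
  -- the series term computation
  have hterm : ∀ k : ℕ, (a * 2 ^ ((k:ℝ) + 1)) ^ δ * (A / (a * 2 ^ ((k:ℝ)))) =
      a ^ δ * V * 2 ^ δ * ((2:ℝ≥0∞) ^ (δ - 1)) ^ k := by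
    intro k
    have hAaV : A = a * V := by rw [ha, ENNReal.div_mul_cancel hV0 hVt]
    have hdiv : A / (a * 2 ^ ((k:ℝ))) = V / 2 ^ ((k:ℝ)) := by
      rw [hAaV, ENNReal.mul_div_mul_left _ _ ha0 hat]
    rw [hdiv, ENNReal.mul_rpow_of_nonneg _ _ hδ0.le, div_eq_mul_inv,
      ← ENNReal.rpow_natCast ((2:ℝ≥0∞) ^ (δ - 1)) k, ← ENNReal.rpow_mul,
      ← ENNReal.rpow_mul]
    have hsplit : ((k:ℝ) + 1) * δ = δ + ((δ - 1) * (k:ℝ)) + (k:ℝ) := by ring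
    rw [hsplit, ENNReal.rpow_add _ _ hb0 hbt, ENNReal.rpow_add _ _ hb0 hbt]
    have hcancel : (2:ℝ≥0∞) ^ ((k:ℝ)) * ((2:ℝ≥0∞) ^ ((k:ℝ)))⁻¹ = 1 :=
      ENNReal.mul_inv_cancel (hbk0 _) (hbkt k)
    calc a ^ δ * (2 ^ δ * 2 ^ ((δ - 1) * (k:ℝ)) * 2 ^ ((k:ℝ))) * (V * (2 ^ ((k:ℝ)))⁻¹)
        = a ^ δ * V * 2 ^ δ * 2 ^ ((δ - 1) * (k:ℝ)) * (2 ^ ((k:ℝ)) * (2 ^ ((k:ℝ)))⁻¹) := by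
          ring
      _ = a ^ δ * V * 2 ^ δ * 2 ^ ((δ - 1) * (k:ℝ)) := by rw [hcancel, mul_one]
  -- integrate
  have hKinv : (1:ℝ≥0∞) ≤ (ENNReal.ofReal (1 - δ))⁻¹ :=
    ENNReal.one_le_inv.mpr (by
      calc ENNReal.ofReal (1 - δ) ≤ ENNReal.ofReal 1 :=
            ENNReal.ofReal_le_ofReal (by linarith)
        _ = 1 := ENNReal.ofReal_one)
  calc ∫⁻ y, h y ^ δ ∂ν
      ≤ ∫⁻ y, (a ^ δ + ∑' k : ℕ, Set.indicator {z | a * 2 ^ ((k:ℝ)) < h z}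
          (fun _ => (a * 2 ^ ((k:ℝ) + 1)) ^ δ) y) ∂ν := lintegral_mono hpt
    _ = a ^ δ * ν Set.univ + ∑' k : ℕ, (a * 2 ^ ((k:ℝ) + 1)) ^ δ *
          ν {z | a * 2 ^ ((k:ℝ)) < h z} := by
        rw [lintegral_add_left measurable_const, lintegral_const,
          lintegral_tsum (fun k => (measurable_const.indicator (hmeasset k)).aemeasurable)]
        congr 1
        exact tsum_congr fun k => lintegral_indicator_const (hmeasset k) _
    _ ≤ a ^ δ * V + ∑' k : ℕ, (a * 2 ^ ((k:ℝ) + 1)) ^ δ * (A / (a * 2 ^ ((k:ℝ)))) := by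
        refine add_le_add (mul_le_mul_right hν _) (ENNReal.tsum_le_tsum fun k => ?_)
        refine mul_le_mul_right (hw _ ?_ ?_) _
        · exact mul_ne_zero ha0 (hbk0 _)
        · exact ENNReal.mul_ne_top hat (hbkt k)
    _ = a ^ δ * V + a ^ δ * V * 2 ^ δ * (1 - (2:ℝ≥0∞) ^ (δ - 1))⁻¹ := by
        rw [tsum_congr hterm, ENNReal.tsum_mul_left, ENNReal.tsum_geometric]
    _ ≤ a ^ δ * V * (ENNReal.ofReal (1 - δ))⁻¹ +
          a ^ δ * V * 2 * (2 * (ENNReal.ofReal (1 - δ))⁻¹) := by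
        refine add_le_add ?_ ?_
        · calc a ^ δ * V = a ^ δ * V * 1 := (mul_one _).symm
            _ ≤ a ^ δ * V * (ENNReal.ofReal (1 - δ))⁻¹ := mul_le_mul_right hKinv _
        · refine mul_le_mul' (mul_le_mul_right ?_ _) (aux_geom_inv_le hδ0 hδ1)
          calc (2:ℝ≥0∞) ^ δ ≤ 2 ^ (1:ℝ) :=
                ENNReal.rpow_le_rpow_of_exponent_le one_le_two hδ1.le
            _ = 2 := ENNReal.rpow_one 2
    _ = 5 * (ENNReal.ofReal (1 - δ))⁻¹ * a ^ δ * V := by ring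
lemma aux_measurable {α : Type*} [MeasurableSpace α] (μ : Measure α) (𝒟 : Set (Set α))
    (hcount : 𝒟.Countable) (hmeas : ∀ Q ∈ 𝒟, MeasurableSet Q) (g : α → ℝ≥0∞) :
    Measurable fun x => ⨆ Q ∈ 𝒟, ⨆ (_ : x ∈ Q), (μ Q)⁻¹ * ∫⁻ y in Q, g y ∂μ := by
  haveI := hcount.to_subtype
  have heq : (fun x => ⨆ Q ∈ 𝒟, ⨆ (_ : x ∈ Q), (μ Q)⁻¹ * ∫⁻ y in Q, g y ∂μ) =
      fun x => ⨆ Q : 𝒟, Set.indicator (Q : Set α)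
        (fun _ => (μ (Q : Set α))⁻¹ * ∫⁻ y in (Q : Set α), g y ∂μ) x := by
    funext x
    rw [← iSup_subtype'']
    refine iSup_congr fun Q => ?_
    by_cases hx : x ∈ (Q : Set α)
    · rw [Set.indicator_of_mem hx, iSup_pos hx]
    · rw [Set.indicator_of_notMem hx, iSup_neg hx]
      rfl
  rw [heq]
  exact Measurable.iSup fun Q => measurable_const.indicator (hmeas Q Q.2)

/-- Kolmogorov-type self-improvement: there is a constant `c`, depending only on the grid and
measure, such that for every `0 < δ < 1` and every `f` with `ℳf < ∞` a.e.,
`ℳ((ℳf)^δ) ≤ c (1−δ)⁻¹ (ℳf)^δ` a.e.; in particular `(ℳf)^δ ∈ A₁` with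
`[(ℳf)^δ]_{A₁} ≤ c/(1−δ)`. -/
theorem stmt_10 {α : Type*} [MeasurableSpace α] (μ : Measure α)
    (𝒟 : Set (Set α)) (hcount : 𝒟.Countable)
    (hmeas : ∀ Q ∈ 𝒟, MeasurableSet Q)
    (hfin : ∀ Q ∈ 𝒟, 0 < μ Q ∧ μ Q < ⊤)
    (hnest : ∀ Q ∈ 𝒟, ∀ Q' ∈ 𝒟, Disjoint Q Q' ∨ Q ⊆ Q' ∨ Q' ⊆ Q)
    (M : (α → ℝ≥0∞) → α → ℝ≥0∞)
    (hM : M = fun g x => ⨆ Q ∈ 𝒟, ⨆ (_ : x ∈ Q), (μ Q)⁻¹ * ∫⁻ y in Q, g y ∂μ) :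
    ∃ c : ℝ≥0∞, 0 < c ∧ c < ⊤ ∧
      ∀ (δ : ℝ), 0 < δ → δ < 1 →
        ∀ f : α → ℝ≥0∞, Measurable f → (∀ᵐ x ∂μ, M f x < ⊤) →
          ∀ᵐ x ∂μ, M (fun y => (M f y) ^ δ) x ≤
            c * (ENNReal.ofReal (1 - δ))⁻¹ * (M f x) ^ δ := by
  refine ⟨6, by norm_num, by norm_num, ?_⟩
  intro δ hδ0 hδ1 f hf _hMf
  refine Filter.Eventually.of_forall fun x => ?_
  set K := (ENNReal.ofReal (1 - δ))⁻¹ with hK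
  have hK1 : (1:ℝ≥0∞) ≤ K := by
    rw [hK, ENNReal.one_le_inv]
    calc ENNReal.ofReal (1 - δ) ≤ ENNReal.ofReal 1 := ENNReal.ofReal_le_ofReal (by linarith)
      _ = 1 := ENNReal.ofReal_one
  have hMapp : ∀ (g : α → ℝ≥0∞) (y : α), M g y =
      ⨆ Q' ∈ 𝒟, ⨆ (_ : y ∈ Q'), (μ Q')⁻¹ * ∫⁻ z in Q', g z ∂μ := by
    intro g y; rw [hM]
  -- basic fact: averages are below the maximal function
  have F1 : ∀ (g : α → ℝ≥0∞), ∀ Q' ∈ 𝒟, ∀ x' ∈ Q',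
      (μ Q')⁻¹ * ∫⁻ z in Q', g z ∂μ ≤ M g x' := by
    intro g Q' hQ' x' hx'
    rw [hMapp]
    exact le_iSup₂_of_le Q' hQ' (le_iSup_of_le hx' le_rfl)
  -- the maximal function applied at level Q
  rw [hMapp (fun y => M f y ^ δ) x]
  refine iSup₂_le fun Q hQ => iSup_le fun hxQ => ?_
  have hμ0 : μ Q ≠ 0 := (hfin Q hQ).1.ne'
  have hμt : μ Q ≠ ⊤ := (hfin Q hQ).2.ne
  have hQm : MeasurableSet Q := hmeas Q hQ
  set g₁ : α → ℝ≥0∞ := Q.indicator f with hg₁def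
  set g₂ : α → ℝ≥0∞ := Qᶜ.indicator f with hg₂def
  have hg₁ : Measurable g₁ := hf.indicator hQm
  have hg₂ : Measurable g₂ := hf.indicator hQm.compl
  have hsplit : ∀ z, f z = g₁ z + g₂ z := fun z =>
    (congrFun (Set.indicator_self_add_compl Q f) z).symm
  -- subadditivity
  have F2 : ∀ y, M f y ≤ M g₁ y + M g₂ y := by
    intro y
    rw [hMapp f y]
    refine iSup₂_le fun Q' hQ' => iSup_le fun hy => ?_
    have hint : ∫⁻ z in Q', f z ∂μ = ∫⁻ z in Q', g₁ z ∂μ + ∫⁻ z in Q', g₂ z ∂μ := by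
      rw [← lintegral_add_left hg₁]
      exact lintegral_congr fun z => hsplit z
    rw [hint, mul_add]
    exact add_le_add (F1 g₁ Q' hQ' y hy) (F1 g₂ Q' hQ' y hy)
  -- the far part is controlled by M f x for y ∈ Q
  have F3 : ∀ y ∈ Q, M g₂ y ≤ M f x := by
    intro y hy
    rw [hMapp g₂ y]
    refine iSup₂_le fun Q' hQ' => iSup_le fun hyQ' => ?_
    rcases hnest Q hQ Q' hQ' with hd | hsub | hsup
    · exact absurd hyQ' (Set.disjoint_left.mp hd hy)
    · refine le_trans ?_ (F1 f Q' hQ' x (hsub hxQ))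
      exact mul_le_mul_right (lintegral_mono fun z => Set.indicator_le_self _ _ z) _
    · have hzero : ∫⁻ z in Q', g₂ z ∂μ = 0 := by
        refine le_antisymm ?_ (zero_le)
        calc ∫⁻ z in Q', g₂ z ∂μ ≤ ∫⁻ _ in Q', 0 ∂μ := by
              refine setLIntegral_mono' (hmeas Q' hQ') fun z hz => ?_
              rw [hg₂def, Set.indicator_of_notMem (Set.notMem_compl_iff.mpr (hsup hz))]
          _ = 0 := by simp
      rw [hzero, mul_zero]
      exact zero_le
  -- Kolmogorov bound for the local part
  set A := ∫⁻ z in Q, f z ∂μ with hA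
  have hMg₁meas : Measurable (M g₁) := by
    rw [hM]; exact aux_measurable μ 𝒟 hcount hmeas g₁
  have hAint : ∫⁻ z, g₁ z ∂μ = A := by rw [hg₁def, hA, lintegral_indicator hQm]
  have havg : (μ Q)⁻¹ * A ≤ M f x := F1 f Q hQ x hxQ
  have F4 : (μ Q)⁻¹ * ∫⁻ y in Q, (M g₁ y) ^ δ ∂μ ≤ 5 * K * (M f x) ^ δ := by
    by_cases hA0 : A = 0
    · have hg0 : ∀ y, M g₁ y = 0 := by
        intro y
        rw [hMapp g₁ y]
        refine le_antisymm (iSup₂_le fun Q' hQ' => iSup_le fun hy => ?_) (zero_le)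
        have hz : ∫⁻ z in Q', g₁ z ∂μ = 0 :=
          le_antisymm (le_trans (setLIntegral_le_lintegral _ _) (by rw [hAint, hA0]))
            (zero_le)
        simp [hz]
      calc (μ Q)⁻¹ * ∫⁻ y in Q, (M g₁ y) ^ δ ∂μ
          = (μ Q)⁻¹ * ∫⁻ _ in Q, (0:ℝ≥0∞) ∂μ := by
            simp only [hg0, ENNReal.zero_rpow_of_pos hδ0]
        _ = 0 := by simp
        _ ≤ _ := zero_le
    by_cases hAt : A = ⊤
    · have hMtop : M f x = ⊤ := by
        refine top_le_iff.mp ?_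
        calc (⊤:ℝ≥0∞) = (μ Q)⁻¹ * A := by
              rw [hAt, ENNReal.mul_top (ENNReal.inv_ne_zero.mpr hμt)]
          _ ≤ M f x := havg
      rw [hMtop, ENNReal.top_rpow_of_pos hδ0, ENNReal.mul_top]
      · exact le_top
      · exact mul_ne_zero (by norm_num) (by simp [hK, ENNReal.inv_ne_zero])
    have hw : ∀ t : ℝ≥0∞, t ≠ 0 → t ≠ ⊤ →
        (μ.restrict Q) {y | t < M g₁ y} ≤ A / t := by
      intro t ht htt
      refine le_trans (Measure.restrict_apply_le _ _) ?_
      have := aux_weak μ 𝒟 hcount hmeas hfin hnest g₁ t ht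
      rw [hAint] at this
      simp only [hM]
      exact this
    have hkol := aux_kolmogorov (μ.restrict Q) (M g₁) hMg₁meas A (μ Q) hA0 hAt hμ0 hμt
      (by rw [Measure.restrict_apply_univ]) hw δ hδ0 hδ1
    calc (μ Q)⁻¹ * ∫⁻ y in Q, (M g₁ y) ^ δ ∂μ
        ≤ (μ Q)⁻¹ * (5 * K * (A / μ Q) ^ δ * μ Q) := mul_le_mul_right hkol _
      _ = 5 * K * (A / μ Q) ^ δ * ((μ Q)⁻¹ * μ Q) := by ring
      _ = 5 * K * ((μ Q)⁻¹ * A) ^ δ := by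
          rw [ENNReal.inv_mul_cancel hμ0 hμt, mul_one, div_eq_mul_inv, mul_comm A]
      _ ≤ 5 * K * (M f x) ^ δ :=
          mul_le_mul_right (ENNReal.rpow_le_rpow havg hδ0.le) _
  -- put everything together
  calc (μ Q)⁻¹ * ∫⁻ y in Q, (M f y) ^ δ ∂μ
      ≤ (μ Q)⁻¹ * ∫⁻ y in Q, ((M g₁ y) ^ δ + (M f x) ^ δ) ∂μ := by
        refine mul_le_mul_right (setLIntegral_mono' hQm fun y hy => ?_) _
        calc (M f y) ^ δ ≤ (M g₁ y + M f x) ^ δ :=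
              ENNReal.rpow_le_rpow (le_trans (F2 y) (add_le_add_right (F3 y hy) _)) hδ0.le
          _ ≤ (M g₁ y) ^ δ + (M f x) ^ δ :=
              ENNReal.rpow_add_le_add_rpow _ _ hδ0.le hδ1.le
    _ = (μ Q)⁻¹ * (∫⁻ y in Q, (M g₁ y) ^ δ ∂μ + (M f x) ^ δ * μ Q) := by
        rw [lintegral_add_right _ measurable_const, setLIntegral_const]
    _ = (μ Q)⁻¹ * ∫⁻ y in Q, (M g₁ y) ^ δ ∂μ + (M f x) ^ δ * ((μ Q)⁻¹ * μ Q) := by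
        ring
    _ ≤ 5 * K * (M f x) ^ δ + K * (M f x) ^ δ := by
        rw [ENNReal.inv_mul_cancel hμ0 hμt, mul_one]
        exact add_le_add F4 (by
          calc (M f x) ^ δ = 1 * (M f x) ^ δ := (one_mul _).symm
            _ ≤ K * (M f x) ^ δ := mul_le_mul_left hK1 _)
    _ = 6 * K * (M f x) ^ δ := by ring
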